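/- Let (g = U' ⊕ V', B') be a Manin algebra of dimension n over a field K of characteristic 0. If z(g) ∩ U' ≠ {0} or z(g) ∩ V' ≠ {0} (z(g) denoting the centre of g), then there exist a Manin algebra (G = U ⊕ V, B) of dimension n − 2 and a derivation δ of G, skew-symmetric with respect to B, with δ(V) ⊆ V, such that (g = U' ⊕ V', B') is isomorphic to the double extension of (G = U ⊕ V, B) by the one-dimensional Lie algebra by means of δ, with Manin decomposition U ⊕ Ke* and V ⊕ Ke, via a Lie algebra isomorphism preserving the scalar products and carrying U' to U ⊕ Ke* and V' to V ⊕ Ke (possibly after interchanging the roles of U' and V'). -/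

import Mathlib

set_option maxHeartbeats 1600000 in
theorem stmt_14_aux (K : Type u) [Field K] [CharZero K]
    (g : Type v) [LieRing g] [LieAlgebra K g] [Module.Finite K g]
    (B' : LinearMap.BilinForm K g)
    (hBnd : B'.Nondegenerate)
    (hBsymm : ∀ x y : g, B' x y = B' y x)
    (hBinv : ∀ x y z : g, B' ⁅x, y⁆ z = B' x ⁅y, z⁆)
    (U' V' : LieSubalgebra K g)
    (hUV' : IsCompl U'.toSubmodule V'.toSubmodule)
    (hU'iso : ∀ x ∈ U', ∀ y ∈ U', B' x y = 0)
    (hV'iso : ∀ x ∈ V', ∀ y ∈ V', B' x y = 0)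
    (hcent : ∃ x : g, x ∈ LieAlgebra.center K g ∧ x ∈ U' ∧ x ≠ 0) :
    ∃ (G : Type v) (_ : LieRing G) (_ : LieAlgebra K G) (_ : Module.Finite K G)
      (B : LinearMap.BilinForm K G) (U V : LieSubalgebra K G) (δ : G →ₗ[K] G),
      B.Nondegenerate ∧ (∀ x y : G, B x y = B y x) ∧
      (∀ x y z : G, B ⁅x, y⁆ z = B x ⁅y, z⁆) ∧
      IsCompl U.toSubmodule V.toSubmodule ∧
      (∀ x ∈ U, ∀ y ∈ U, B x y = 0) ∧
      (∀ x ∈ V, ∀ y ∈ V, B x y = 0) ∧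
      Module.finrank K G = Module.finrank K g - 2 ∧
      (∀ x y : G, δ ⁅x, y⁆ = ⁅δ x, y⁆ + ⁅x, δ y⁆) ∧
      (∀ x y : G, B (δ x) y = - B x (δ y)) ∧
      (∀ x ∈ V, δ x ∈ V) ∧
      ∃ φ : g ≃ₗ[K] K × G × K,
        (∀ p q : g, φ ⁅p, q⁆ =
          (0, ⁅(φ p).2.1, (φ q).2.1⁆ + (φ p).1 • δ (φ q).2.1 - (φ q).1 • δ (φ p).2.1,
            B (δ (φ p).2.1) (φ q).2.1)) ∧
        (∀ p q : g, B' p q =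
          B (φ p).2.1 (φ q).2.1 + (φ p).1 * (φ q).2.2 + (φ q).1 * (φ p).2.2) ∧
        (∀ x : g, (x ∈ U' ↔ ((φ x).1 = 0 ∧ (φ x).2.1 ∈ U)) ∧
            (x ∈ V' ↔ ((φ x).2.2 = 0 ∧ (φ x).2.1 ∈ V))) := by
  obtain ⟨c, hcZ, hcU, hc0⟩ := hcent
  have hcbr : ∀ x : g, ⁅x, c⁆ = 0 := (LieModule.mem_maxTrivSubmodule K g g c).1 hcZ
  have hcbr' : ∀ x : g, ⁅c, x⁆ = 0 := fun x => by
    rw [← lie_skew c x, hcbr, neg_zero]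
  have hBcc : B' c c = 0 := hU'iso c hcU c hcU
  -- B' c kills all brackets
  have hBclie : ∀ x y : g, B' c ⁅x, y⁆ = 0 := fun x y => by
    rw [hBsymm, hBinv, hcbr, map_zero]
  -- find f ∈ V' with B' c f = 1
  have hex : ∃ y : g, B' c y ≠ 0 := by
    by_contra h
    push_neg at h
    exact hc0 (hBnd.1 c h)
  obtain ⟨y, hy⟩ := hex
  have hytop : y ∈ U'.toSubmodule ⊔ V'.toSubmodule := by
    rw [hUV'.codisjoint.eq_top]; trivial
  obtain ⟨u, hu, v, hv, huv⟩ := Submodule.mem_sup.mp hytop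
  have hBcv : B' c v ≠ 0 := by
    intro h
    apply hy
    rw [← huv, map_add, h, add_zero, hU'iso c hcU u hu]
  obtain ⟨f, hfV, hBcf⟩ : ∃ f : g, f ∈ V' ∧ B' c f = 1 :=
    ⟨(B' c v)⁻¹ • v, V'.smul_mem _ hv, by
      rw [map_smul, smul_eq_mul, inv_mul_cancel₀ hBcv]⟩
  have hBfc : B' f c = 1 := by rw [hBsymm, hBcf]
  have hBff : B' f f = 0 := hV'iso f hfV f hfV
  have hBflie : ∀ x : g, B' f ⁅f, x⁆ = 0 := fun x => by
    have h1 : B' f ⁅f, x⁆ = - B' f ⁅f, x⁆ := by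
      calc B' f ⁅f, x⁆ = B' ⁅f, x⁆ f := hBsymm _ _
        _ = B' f ⁅x, f⁆ := hBinv _ _ _
        _ = B' f (-⁅f, x⁆) := by rw [← lie_skew]
        _ = - B' f ⁅f, x⁆ := by rw [map_neg]
    have h2 : (2 : K) * B' f ⁅f, x⁆ = 0 := by linear_combination h1
    rcases mul_eq_zero.mp h2 with h | h
    · exact absurd h two_ne_zero
    · exact h
  -- the submodule W
  set W : Submodule K g := LinearMap.ker (B' c) ⊓ LinearMap.ker (B' f) with hWdef
  have hmemW : ∀ x : g, x ∈ W ↔ B' c x = 0 ∧ B' f x = 0 := fun x => by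
    simp [hWdef, LinearMap.mem_ker]
  -- the projection π
  obtain ⟨π, hπ_apply⟩ : ∃ π : g →ₗ[K] g,
      ∀ x : g, π x = x - (B' f x) • c - (B' c x) • f :=
    ⟨LinearMap.id - ((B' f).smulRight c) - ((B' c).smulRight f), fun x => by simp⟩
  have hπf : π f = 0 := by
    rw [hπ_apply, hBff, hBcf, zero_smul, one_smul, sub_zero, sub_self]
  have hπc : π c = 0 := by
    rw [hπ_apply, hBfc, hBcc, one_smul, zero_smul, sub_zero, sub_self]
  have hπW : ∀ x : g, π x ∈ W := fun x => by
    rw [hmemW, hπ_apply]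
    constructor
    · simp [map_sub, map_smul, hBcc, hBcf]
    · simp [map_sub, map_smul, hBfc, hBff]
  have hπid : ∀ x : g, x ∈ W → π x = x := fun x hx => by
    obtain ⟨h1, h2⟩ := (hmemW x).1 hx
    rw [hπ_apply, h1, h2, zero_smul, zero_smul, sub_zero, sub_zero]
  have hdecomp : ∀ x : g, x = π x + (B' c x) • f + (B' f x) • c := fun x => by
    rw [hπ_apply]; abel
  have hlieW : ∀ x : g, ⁅f, x⁆ ∈ W := fun x =>
    (hmemW _).2 ⟨hBclie _ _, hBflie _⟩
  have hπlie : ∀ x : g, x ∈ W → ⁅f, π x⁆ = ⁅f, x⁆ := fun x hx => by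
    rw [hπid x hx]
  -- key bracket decomposition
  have hkey : ∀ p q : g, ⁅p, q⁆ =
      ⁅π p, π q⁆ + (B' c p) • ⁅f, π q⁆ - (B' c q) • ⁅f, π p⁆ := fun p q => by
    conv_lhs => rw [hdecomp p, hdecomp q]
    simp only [add_lie, lie_add, smul_lie, lie_smul, hcbr, hcbr', lie_self,
      smul_zero, add_zero, zero_add]
    rw [← lie_skew f (π p)]
    module
  have hπbr : ∀ p q : g, π ⁅p, q⁆ = ⁅p, q⁆ - (B' f ⁅p, q⁆) • c := fun p q => by
    rw [hπ_apply, hBclie, zero_smul, sub_zero]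
  -- define the Lie ring structure on ↥W
  letI brW : Bracket (↥W) (↥W) := ⟨fun x y => ⟨π ⁅(x : g), (y : g)⁆, hπW _⟩⟩
  have hbr : ∀ x y : ↥W, ((⁅x, y⁆ : ↥W) : g) = π ⁅(x : g), (y : g)⁆ := fun _ _ => rfl
  have hπbrW : ∀ x y : ↥W, ⁅f, ((⁅x, y⁆ : ↥W) : g)⁆ = ⁅f, ⁅(x : g), (y : g)⁆⁆ :=
    fun x y => by
      rw [hbr, hπbr, lie_sub, lie_smul, hcbr, smul_zero, sub_zero]
  have hbrl : ∀ (x y : ↥W) (z : g), ⁅((⁅x, y⁆ : ↥W) : g), z⁆ = ⁅⁅(x : g), (y : g)⁆, z⁆ :=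
    fun x y z => by
      rw [hbr, hπbr, sub_lie, smul_lie, hcbr', smul_zero, sub_zero]
  have hbrr : ∀ (x y : ↥W) (z : g), ⁅z, ((⁅x, y⁆ : ↥W) : g)⁆ = ⁅z, ⁅(x : g), (y : g)⁆⁆ :=
    fun x y z => by
      rw [hbr, hπbr, lie_sub, lie_smul, hcbr, smul_zero, sub_zero]
  letI ringW : LieRing (↥W) :=
    { (inferInstance : AddCommGroup (↥W)), brW with
      add_lie := fun x y z => by
        apply Subtype.ext
        show π ⁅((x + y : ↥W) : g), (z : g)⁆ = π ⁅(x : g), z⁆ + π ⁅(y : g), z⁆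
        rw [Submodule.coe_add, add_lie, map_add]
      lie_add := fun x y z => by
        apply Subtype.ext
        show π ⁅(x : g), ((y + z : ↥W) : g)⁆ = π ⁅(x : g), y⁆ + π ⁅(x : g), z⁆
        rw [Submodule.coe_add, lie_add, map_add]
      lie_self := fun x => by
        apply Subtype.ext
        show π ⁅(x : g), (x : g)⁆ = 0
        rw [lie_self, map_zero]
      leibniz_lie := fun x y z => by
        apply Subtype.ext
        show π ⁅(x : g), ((⁅y, z⁆ : ↥W) : g)⁆ =
          π ⁅((⁅x, y⁆ : ↥W) : g), (z : g)⁆ + π ⁅(y : g), ((⁅x, z⁆ : ↥W) : g)⁆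
        rw [hbrr, hbrl, hbrr, ← map_add, ← leibniz_lie] }
  letI algW : LieAlgebra K (↥W) :=
    { lie_smul := fun t x y => by
        apply Subtype.ext
        show π ⁅(x : g), ((t • y : ↥W) : g)⁆ = t • π ⁅(x : g), (y : g)⁆
        rw [Submodule.coe_smul, lie_smul, map_smul] }
  letI finW : Module.Finite K (↥W) := inferInstance
  -- the bilinear form
  set B : LinearMap.BilinForm K (↥W) := B'.restrict W with hBdef
  have hBapp : ∀ x y : ↥W, B x y = B' (x : g) (y : g) := fun x y => rfl
  -- subalgebras U and V
  have hUlie : ∀ x y : ↥W, (x : g) ∈ U' → (y : g) ∈ U' → ((⁅x, y⁆ : ↥W) : g) ∈ U' := by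
    intro x y hx hy
    rw [hbr, hπbr]
    exact Submodule.sub_mem _ (U'.lie_mem hx hy) (Submodule.smul_mem _ _ hcU)
  have hVlie : ∀ x y : ↥W, (x : g) ∈ V' → (y : g) ∈ V' → ((⁅x, y⁆ : ↥W) : g) ∈ V' := by
    intro x y hx hy
    rw [hbr, hπbr, hBsymm, hV'iso _ (V'.lie_mem hx hy) f hfV, zero_smul, sub_zero]
    exact V'.lie_mem hx hy
  set U : LieSubalgebra K (↥W) :=
    { U'.toSubmodule.comap W.subtype with
      lie_mem' := fun {x y} hx hy => hUlie x y hx hy } with hUdef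
  set V : LieSubalgebra K (↥W) :=
    { V'.toSubmodule.comap W.subtype with
      lie_mem' := fun {x y} hx hy => hVlie x y hx hy } with hVdef
  have hmemU : ∀ x : ↥W, x ∈ U ↔ (x : g) ∈ U' := fun x => Iff.rfl
  have hmemV : ∀ x : ↥W, x ∈ V ↔ (x : g) ∈ V' := fun x => Iff.rfl
  -- the derivation δ
  set δ : (↥W) →ₗ[K] (↥W) :=
    LinearMap.codRestrict W (((LieAlgebra.ad K g f) : g →ₗ[K] g) ∘ₗ W.subtype)
      (fun x => hlieW (x : g)) with hδdef
  have hδapp : ∀ x : ↥W, ((δ x : ↥W) : g) = ⁅f, (x : g)⁆ := fun x => rfl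
  refine ⟨↥W, ringW, algW, finW, B, U, V, δ, ?_, ?_, ?_, ?_, ?_, ?_, ?_, ?_, ?_, ?_, ?_⟩
  · -- nondegenerate
    suffices hL : B.SeparatingLeft from ⟨hL, fun x hx => hL x fun y => by rw [hBapp, hBsymm]; exact hx y⟩
    intro x hx
    apply Subtype.ext
    apply hBnd.1
    intro z
    obtain ⟨hc1, hf1⟩ := (hmemW (x : g)).1 x.2
    have h1 : B' (x : g) (π z) = 0 := hx ⟨π z, hπW z⟩
    have h2 : B' (x : g) f = 0 := by rw [hBsymm]; exact hf1
    have h3 : B' (x : g) c = 0 := by rw [hBsymm]; exact hc1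
    conv_lhs => rw [hdecomp z]
    rw [map_add, map_add, map_smul, map_smul, h1, h2, h3]
    simp
  · -- symmetric
    intro x y; rw [hBapp, hBapp, hBsymm]
  · -- invariant
    intro x y z
    have hcz : B' c (z : g) = 0 := ((hmemW _).1 z.2).1
    have hxc : B' (x : g) c = 0 := by rw [hBsymm]; exact ((hmemW _).1 x.2).1
    have e1 : B' (π ⁅(x : g), (y : g)⁆) (z : g) = B' ⁅(x : g), (y : g)⁆ (z : g) := by
      rw [hπbr, map_sub, LinearMap.sub_apply, map_smul, LinearMap.smul_apply,
        hBsymm c (z : g)] at *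
      rw [hcz, smul_zero, sub_zero]
    have e2 : B' (x : g) (π ⁅(y : g), (z : g)⁆) = B' (x : g) ⁅(y : g), (z : g)⁆ := by
      rw [hπbr, map_sub, map_smul, hxc, smul_zero, sub_zero]
    show B' (π ⁅(x : g), (y : g)⁆) (z : g) = B' (x : g) (π ⁅(y : g), (z : g)⁆)
    rw [e1, e2, hBinv]
  · -- IsCompl
    constructor
    · rw [Submodule.disjoint_def]
      intro x hxU hxV
      apply Subtype.ext
      exact (Submodule.disjoint_def.mp hUV'.disjoint) (x : g) hxU hxV
    · rw [codisjoint_iff, eq_top_iff]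
      intro x _
      have hxtop : (x : g) ∈ U'.toSubmodule ⊔ V'.toSubmodule := by
        rw [hUV'.codisjoint.eq_top]; trivial
      obtain ⟨a, ha, b, hb, hab⟩ := Submodule.mem_sup.mp hxtop
      obtain ⟨hc1, hf1⟩ := (hmemW (x : g)).1 x.2
      have hBfb : B' f b = 0 := hV'iso f hfV b hb
      have hBca : B' c a = 0 := hU'iso c hcU a ha
      have hBfa : B' f a = 0 := by
        have : B' f ((x : g) - b) = B' f a := by rw [← hab]; rw [add_sub_cancel_right]
        rw [← this, map_sub, hf1, hBfb, sub_zero]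
      have hBcb : B' c b = 0 := by
        have : B' c ((x : g) - a) = B' c b := by
          rw [← hab, map_sub, map_add, hBca]; ring
        rw [← this, map_sub, hc1, hBca, sub_zero]
      have haW : a ∈ W := (hmemW a).2 ⟨hBca, hBfa⟩
      have hbW : b ∈ W := (hmemW b).2 ⟨hBcb, hBfb⟩
      apply Submodule.mem_sup.mpr
      exact ⟨⟨a, haW⟩, ha, ⟨b, hbW⟩, hb, Subtype.ext hab⟩
  · -- U isotropic
    intro x hx y hy
    exact hU'iso _ ((hmemU x).1 hx) _ ((hmemU y).1 hy)
  · -- V isotropic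
    intro x hx y hy
    exact hV'iso _ ((hmemV x).1 hx) _ ((hmemV y).1 hy)
  · -- finrank
    set L : g →ₗ[K] K × K := (B' c).prod (B' f) with hLdef
    have hker : LinearMap.ker L = W := by
      rw [hLdef, LinearMap.ker_prod]
    have hsurj : Function.Surjective L := by
      rintro ⟨a, b⟩
      refine ⟨b • c + a • f, Prod.ext ?_ ?_⟩ <;>
        simp [hLdef, map_add, map_smul, hBcc, hBcf, hBfc, hBff]
    have hrange : LinearMap.range L = ⊤ := LinearMap.range_eq_top.mpr hsurj
    have h := LinearMap.finrank_range_add_finrank_ker L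
    rw [hrange, hker] at h
    have h2 : Module.finrank K (⊤ : Submodule K (K × K)) = 2 := by
      rw [finrank_top]
      simp [Module.finrank_prod]
    rw [h2] at h
    omega
  · -- derivation
    intro x y
    apply Subtype.ext
    show ⁅f, ((⁅x, y⁆ : ↥W) : g)⁆ = ((⁅δ x, y⁆ + ⁅x, δ y⁆ : ↥W) : g)
    rw [Submodule.coe_add, hbr (δ x) y, hbr x (δ y), hδapp, hδapp, hπbrW x y,
      ← map_add, ← leibniz_lie]
    exact (hπid _ (hlieW _)).symm
  · -- skew
    intro x y
    rw [hBapp, hBapp, hδapp, hδapp]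
    have h1 : B' ⁅f, (x : g)⁆ (y : g) = B' f ⁅(x : g), (y : g)⁆ := hBinv _ _ _
    have h2 : B' (x : g) ⁅f, (y : g)⁆ = - B' f ⁅(x : g), (y : g)⁆ := by
      calc B' (x : g) ⁅f, (y : g)⁆ = B' ⁅f, (y : g)⁆ (x : g) := hBsymm _ _
        _ = B' f ⁅(y : g), (x : g)⁆ := hBinv _ _ _
        _ = B' f (-⁅(x : g), (y : g)⁆) := by rw [← lie_skew]
        _ = - B' f ⁅(x : g), (y : g)⁆ := by rw [map_neg]
    rw [h1, h2, neg_neg]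
  · -- δ(V) ⊆ V
    intro x hx
    rw [hmemV] at hx ⊢
    rw [hδapp]
    exact V'.lie_mem hfV hx
  · -- the isomorphism
    set φl : g →ₗ[K] K × (↥W) × K :=
      (B' c).prod ((π.codRestrict W hπW).prod (B' f)) with hφldef
    obtain ⟨φr, hφr_apply⟩ : ∃ φr : (K × (↥W) × K) →ₗ[K] g,
        ∀ p : K × (↥W) × K, φr p = p.1 • f + ((p.2.1 : ↥W) : g) + p.2.2 • c := by
      refine ⟨{ toFun := fun p => p.1 • f + ((p.2.1 : ↥W) : g) + p.2.2 • c,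
                map_add' := ?_, map_smul' := ?_ }, fun p => rfl⟩
      · rintro ⟨a, w, b⟩ ⟨a', w', b'⟩
        show (a + a') • f + ((w + w' : ↥W) : g) + (b + b') • c = _
        rw [Submodule.coe_add, add_smul, add_smul]
        abel
      · rintro t ⟨a, w, b⟩
        show (t * a) • f + ((t • w : ↥W) : g) + (t * b) • c = _
        simp [Submodule.coe_smul, mul_smul, smul_add]
    have hlr : φl ∘ₗ φr = LinearMap.id := by
      apply LinearMap.ext
      rintro ⟨a, w, b⟩
      obtain ⟨hcw, hfw⟩ := (hmemW (w : g)).1 w.2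
      have h1 : π (a • f + (w : g) + b • c) = (w : g) := by
        rw [map_add, map_add, map_smul, map_smul, hπf, hπc, hπid _ w.2,
          smul_zero, smul_zero, add_zero, zero_add]
      simp only [LinearMap.comp_apply, LinearMap.id_apply, hφldef, hφr_apply,
        LinearMap.prod_apply, Function.prod]
      refine Prod.ext ?_ (Prod.ext ?_ ?_)
      · simp only [map_add, map_smul, smul_eq_mul, hBcf, hBcc, hcw]
        ring
      · exact Subtype.ext h1
      · simp only [map_add, map_smul, smul_eq_mul, hBff, hBfc, hfw]
        ring
    have hrl : φr ∘ₗ φl = LinearMap.id := by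
      apply LinearMap.ext
      intro x
      simp only [LinearMap.comp_apply, LinearMap.id_apply, hφldef, hφr_apply,
        LinearMap.prod_apply, Function.prod, LinearMap.codRestrict_apply]
      conv_rhs => rw [hdecomp x]
      abel
    set φ : g ≃ₗ[K] K × (↥W) × K := LinearEquiv.ofLinear φl φr hlr hrl with hφdef
    have hφ1 : ∀ x : g, (φ x).1 = B' c x := fun x => rfl
    have hφ2 : ∀ x : g, ((φ x).2.1 : g) = π x := fun x => rfl
    have hφ3 : ∀ x : g, (φ x).2.2 = B' f x := fun x => rfl
    refine ⟨φ, ?_, ?_, ?_⟩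
    · -- bracket
      intro p q
      refine Prod.ext ?_ (Prod.ext ?_ ?_)
      · rw [hφ1]; exact hBclie p q
      · apply Subtype.ext
        rw [hφ2]
        show π ⁅p, q⁆ = ((⁅(φ p).2.1, (φ q).2.1⁆ + (φ p).1 • δ (φ q).2.1
          - (φ q).1 • δ (φ p).2.1 : ↥W) : g)
        rw [Submodule.coe_sub, Submodule.coe_add, Submodule.coe_smul,
          Submodule.coe_smul, hbr, hδapp, hδapp, hφ1, hφ1, hφ2, hφ2]
        conv_lhs => rw [hkey p q]
        rw [map_sub, map_add, map_smul, map_smul, hπid _ (hlieW _), hπid _ (hlieW _)]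
      · rw [hφ3, hBapp, hδapp, hφ2, hφ2]
        conv_lhs => rw [hkey p q]
        rw [map_sub, map_add, map_smul, map_smul, hBflie, hBflie, smul_zero,
          smul_zero, add_zero, sub_zero]
        exact (hBinv f (π p) (π q)).symm
    · -- scalar product
      intro p q
      rw [hBapp, hφ1, hφ1, hφ2, hφ2, hφ3, hφ3]
      obtain ⟨hcq, hfq⟩ := (hmemW (π q)).1 (hπW q)
      have hpf : B' (π p) f = 0 := by
        rw [hBsymm]; exact ((hmemW (π p)).1 (hπW p)).2
      have hpc : B' (π p) c = 0 := by
        rw [hBsymm]; exact ((hmemW (π p)).1 (hπW p)).1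
      conv_lhs => rw [hdecomp p, hdecomp q]
      simp only [map_add, map_smul, LinearMap.add_apply, LinearMap.smul_apply,
        smul_eq_mul, hBff, hBfc, hBcf, hBcc, hpf, hpc, hcq, hfq]
      ring
    · -- memberships
      intro x
      constructor
      · constructor
        · intro hx
          refine ⟨by rw [hφ1]; exact hU'iso c hcU x hx, ?_⟩
          rw [hmemU, hφ2, hπ_apply, hU'iso c hcU x hx, zero_smul, sub_zero]
          exact Submodule.sub_mem _ hx (Submodule.smul_mem _ _ hcU)
        · rintro ⟨h1, h2⟩
          rw [hφ1] at h1
          rw [hmemU, hφ2] at h2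
          have := hdecomp x
          rw [h1, zero_smul, add_zero] at this
          rw [this]
          exact Submodule.add_mem _ h2 (Submodule.smul_mem _ _ hcU)
      · constructor
        · intro hx
          refine ⟨by rw [hφ3]; exact hV'iso f hfV x hx, ?_⟩
          rw [hmemV, hφ2, hπ_apply, hV'iso f hfV x hx, zero_smul, sub_zero]
          exact Submodule.sub_mem _ hx (Submodule.smul_mem _ _ hfV)
        · rintro ⟨h1, h2⟩
          rw [hφ3] at h1
          rw [hmemV, hφ2] at h2
          have := hdecomp x
          rw [h1, zero_smul, add_zero] at this
          rw [this]
          exact Submodule.add_mem _ h2 (Submodule.smul_mem _ _ hfV)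

/-- If the centre of a Manin algebra `(g = U' ⊕ V', B')` of dimension `n` meets `U'` or `V'`
nontrivially, then `g` is (isometrically, compatibly with the Manin decompositions, possibly
after interchanging `U'` and `V'`) isomorphic to the double extension of a Manin algebra
`(G = U ⊕ V, B)` of dimension `n - 2` by the one-dimensional Lie algebra by means of a
skew-symmetric derivation `δ` with `δ(V) ⊆ V`. -/
theorem stmt_14 (K : Type u) [Field K] [CharZero K]
    (g : Type v) [LieRing g] [LieAlgebra K g] [Module.Finite K g]
    (B' : LinearMap.BilinForm K g)
    (hBnd : B'.Nondegenerate)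
    (hBsymm : ∀ x y : g, B' x y = B' y x)
    (hBinv : ∀ x y z : g, B' ⁅x, y⁆ z = B' x ⁅y, z⁆)
    (U' V' : LieSubalgebra K g)
    (hUV' : IsCompl U'.toSubmodule V'.toSubmodule)
    (hU'iso : ∀ x ∈ U', ∀ y ∈ U', B' x y = 0)
    (hV'iso : ∀ x ∈ V', ∀ y ∈ V', B' x y = 0)
    (hcent : (∃ x : g, x ∈ LieAlgebra.center K g ∧ x ∈ U' ∧ x ≠ 0) ∨
      (∃ x : g, x ∈ LieAlgebra.center K g ∧ x ∈ V' ∧ x ≠ 0)) :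
    ∃ (G : Type v) (_ : LieRing G) (_ : LieAlgebra K G) (_ : Module.Finite K G)
      (B : LinearMap.BilinForm K G) (U V : LieSubalgebra K G) (δ : G →ₗ[K] G),
      B.Nondegenerate ∧ (∀ x y : G, B x y = B y x) ∧
      (∀ x y z : G, B ⁅x, y⁆ z = B x ⁅y, z⁆) ∧
      IsCompl U.toSubmodule V.toSubmodule ∧
      (∀ x ∈ U, ∀ y ∈ U, B x y = 0) ∧
      (∀ x ∈ V, ∀ y ∈ V, B x y = 0) ∧
      Module.finrank K G = Module.finrank K g - 2 ∧
      (∀ x y : G, δ ⁅x, y⁆ = ⁅δ x, y⁆ + ⁅x, δ y⁆) ∧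
      (∀ x y : G, B (δ x) y = - B x (δ y)) ∧
      (∀ x ∈ V, δ x ∈ V) ∧
      ∃ φ : g ≃ₗ[K] K × G × K,
        (∀ p q : g, φ ⁅p, q⁆ =
          (0, ⁅(φ p).2.1, (φ q).2.1⁆ + (φ p).1 • δ (φ q).2.1 - (φ q).1 • δ (φ p).2.1,
            B (δ (φ p).2.1) (φ q).2.1)) ∧
        (∀ p q : g, B' p q =
          B (φ p).2.1 (φ q).2.1 + (φ p).1 * (φ q).2.2 + (φ q).1 * (φ p).2.2) ∧
        ((∀ x : g, (x ∈ U' ↔ ((φ x).1 = 0 ∧ (φ x).2.1 ∈ U)) ∧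
            (x ∈ V' ↔ ((φ x).2.2 = 0 ∧ (φ x).2.1 ∈ V))) ∨
          (∀ x : g, (x ∈ V' ↔ ((φ x).1 = 0 ∧ (φ x).2.1 ∈ U)) ∧
            (x ∈ U' ↔ ((φ x).2.2 = 0 ∧ (φ x).2.1 ∈ V)))) := by
  rcases hcent with h | h
  · obtain ⟨G, i1, i2, i3, B, U, V, δ, h1, h2, h3, h4, h5, h6, h7, h8, h9, h10, φ, p1, p2, p3⟩ :=
      stmt_14_aux K g B' hBnd hBsymm hBinv U' V' hUV' hU'iso hV'iso h
    exact ⟨G, i1, i2, i3, B, U, V, δ, h1, h2, h3, h4, h5, h6, h7, h8, h9, h10, φ, p1, p2,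
      Or.inl p3⟩
  · obtain ⟨G, i1, i2, i3, B, U, V, δ, h1, h2, h3, h4, h5, h6, h7, h8, h9, h10, φ, p1, p2, p3⟩ :=
      stmt_14_aux K g B' hBnd hBsymm hBinv V' U' hUV'.symm hV'iso hU'iso h
    exact ⟨G, i1, i2, i3, B, U, V, δ, h1, h2, h3, h4, h5, h6, h7, h8, h9, h10, φ, p1, p2,
      Or.inr p3⟩
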